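/- Let h(τ) be a product of cyclotomic polynomials and let n, m, k be positive integers. If Φ_n(τ) divides h(τ), then Φ_{(m+k)·n/gcd(n,k)}(τ) divides h^{(k)}(τ^{m+k}). -/

import Mathlib

open Polynomial

/-- For a polynomial `h(τ) = ∏ (τ - ζⱼ)` (split over `ℂ`), the polynomial
`h^{(k)}(τ) = ∏ (τ - ζⱼᵏ)` obtained by raising every root to the `k`-th power. -/
noncomputable def powRoots (k : ℕ) (h : Polynomial ℂ) : Polynomial ℂ :=
  (h.roots.map fun z => X - C (z ^ k)).prod

/-- A squarefree-type divisibility criterion: the cyclotomic polynomial over `ℂ`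
divides any nonzero polynomial vanishing at all primitive roots. -/
lemma cyclotomic_dvd_of_forall_isRoot {M : ℕ} (hM : 0 < M) {q : Polynomial ℂ} (hq : q ≠ 0)
    (hroot : ∀ τ : ℂ, IsPrimitiveRoot τ M → q.IsRoot τ) : cyclotomic M ℂ ∣ q := by
  haveI : NeZero (M : ℂ) := ⟨by exact_mod_cast hM.ne'⟩
  have hc : cyclotomic M ℂ =
      ((cyclotomic M ℂ).roots.map fun a => X - C a).prod := by
    conv_lhs => rw [Splits.eq_prod_roots_of_monic
      (IsAlgClosed.splits _) (cyclotomic.monic M ℂ)]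
  rw [hc]
  rw [Multiset.prod_X_sub_C_dvd_iff_le_roots hq]
  rw [Multiset.le_iff_subset (roots_cyclotomic_nodup)]
  intro τ hτ
  have hprim : IsPrimitiveRoot τ M := by
    rw [mem_roots (cyclotomic_ne_zero M ℂ)] at hτ
    exact isRoot_cyclotomic_iff.mp hτ
  rw [mem_roots hq]
  exact hroot τ hprim

/-- Surjectivity of the `k`-th power map from primitive `n`-th roots onto
primitive `n/gcd(n,k)`-th roots. -/
lemma exists_primitiveRoot_pow_eq {n k : ℕ} (hn : 0 < n) (hk : 0 < k) {μ : ℂ}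
    (hμ : IsPrimitiveRoot μ (n / Nat.gcd n k)) :
    ∃ ζ : ℂ, IsPrimitiveRoot ζ n ∧ ζ ^ k = μ := by
  set g := Nat.gcd n k with hg
  have hgpos : 0 < g := Nat.gcd_pos_of_pos_left k hn
  set d := n / g with hd
  have hdpos : 0 < d := Nat.div_pos (Nat.gcd_le_left k hn) hgpos
  have hnd : n = g * d := (Nat.mul_div_cancel' (Nat.gcd_dvd_left n k)).symm
  set k' := k / g with hk'
  have hkk' : k = g * k' := (Nat.mul_div_cancel' (Nat.gcd_dvd_right n k)).symm
  have hcop : Nat.Coprime d k' := Nat.coprime_div_gcd_div_gcd hgpos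
  obtain ξ := Complex.exp (2 * Real.pi * Complex.I / n)
  have hξ : IsPrimitiveRoot (Complex.exp (2 * Real.pi * Complex.I / n)) n :=
    Complex.isPrimitiveRoot_exp n hn.ne'
  set ξ := Complex.exp (2 * Real.pi * Complex.I / n)
  have hξ' : IsPrimitiveRoot (ξ ^ g) d := hξ.pow hn hnd
  haveI : NeZero d := ⟨hdpos.ne'⟩
  haveI : NeZero n := ⟨hn.ne'⟩
  obtain ⟨i, hilt, hiμ⟩ := hξ'.eq_pow_of_pow_eq_one hμ.pow_eq_one
  have hicop : Nat.Coprime i d := (hξ'.pow_iff_coprime hdpos i).mp (hiμ ▸ hμ)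
  -- find a coprime to n with a * k' ≡ i [MOD d]
  have hddvd : d ∣ n := Nat.div_dvd_of_dvd (Nat.gcd_dvd_left n k)
  let ui : (ZMod d)ˣ := ZMod.unitOfCoprime i hicop
  let uk : (ZMod d)ˣ := ZMod.unitOfCoprime k' hcop.symm
  obtain ⟨u, hu⟩ := ZMod.unitsMap_surjective hddvd (ui * uk⁻¹)
  set a := ((u : ZMod n)).val with ha
  have hacop : Nat.Coprime a n := ZMod.val_coe_unit_coprime u
  refine ⟨ξ ^ a, hξ.pow_of_coprime a hacop, ?_⟩
  have hmod : a * k' ≡ i [MOD d] := by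
    have h1 : ((a * k' : ℕ) : ZMod d) = ((i : ℕ) : ZMod d) := by
      push_cast
      have hcast : ((a : ℕ) : ZMod d) = ((ZMod.unitsMap hddvd u : (ZMod d)ˣ) : ZMod d) := by
        rw [ha, ZMod.natCast_val, ZMod.unitsMap, Units.coe_map]
        rfl
      rw [hcast, hu]
      have hkval : ((k' : ℕ) : ZMod d) = (uk : ZMod d) := (ZMod.coe_unitOfCoprime k' hcop.symm).symm
      rw [hkval]
      rw [← Units.val_mul, inv_mul_cancel_right, ZMod.coe_unitOfCoprime]
    exact (ZMod.natCast_eq_natCast_iff _ _ _).mp h1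
  have horder : orderOf (ξ ^ g) = d := hξ'.eq_orderOf.symm
  calc (ξ ^ a) ^ k = (ξ ^ g) ^ (a * k') := by
        rw [← pow_mul, ← pow_mul]; congr 1; rw [hkk']; ring
    _ = (ξ ^ g) ^ i := by
        conv_lhs => rw [← pow_mod_orderOf]
        conv_rhs => rw [← pow_mod_orderOf]
        rw [horder, hmod]
    _ = μ := hiμ

theorem cyclotomic_dvd_powRoots_comp (h : Polynomial ℂ) (s : Multiset ℕ)
    (hs : ∀ a ∈ s, 0 < a) (hh : h = (s.map fun a => cyclotomic a ℂ).prod)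
    (n m k : ℕ) (hn : 0 < n) (hm : 0 < m) (hk : 0 < k)
    (hdvd : cyclotomic n ℂ ∣ h) :
    cyclotomic ((m + k) * (n / Nat.gcd n k)) ℂ ∣ (powRoots k h).comp (X ^ (m + k)) := by
  have hd : 0 < n / Nat.gcd n k :=
    Nat.div_pos (Nat.gcd_le_left k hn) (Nat.gcd_pos_of_pos_left k hn)
  have hNpos : 0 < (m + k) * (n / Nat.gcd n k) := Nat.mul_pos (by omega) hd
  -- h is monic, hence nonzero
  have hmonic' : h.Monic := by
    rw [hh]
    exact monic_multiset_prod_of_monic _ _ fun a _ => cyclotomic.monic a ℂ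
  have hne : h ≠ 0 := hmonic'.ne_zero
  -- powRoots k h is monic
  have hPmonic : (powRoots k h).Monic := by
    exact monic_multiset_prod_of_monic _ _ fun z _ => monic_X_sub_C _
  have hcomp_monic : ((powRoots k h).comp (X ^ (m + k))).Monic :=
    hPmonic.comp (monic_X_pow _) (by simp; omega)
  refine cyclotomic_dvd_of_forall_isRoot hNpos hcomp_monic.ne_zero fun τ hτ => ?_
  -- τ^(m+k) is a primitive (n/gcd n k)-th root of unity
  have hμ : IsPrimitiveRoot (τ ^ (m + k)) (n / Nat.gcd n k) := hτ.pow hNpos rfl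
  obtain ⟨ζ, hζprim, hζk⟩ := exists_primitiveRoot_pow_eq hn hk hμ
  -- ζ is a root of h
  have hζroot : ζ ∈ h.roots := by
    rw [mem_roots hne]
    obtain ⟨c, rfl⟩ := hdvd
    haveI : NeZero (n : ℂ) := ⟨by exact_mod_cast hn.ne'⟩
    simp [IsRoot, (isRoot_cyclotomic_iff.mpr hζprim : IsRoot _ ζ).eq_zero]
  -- evaluate
  show eval τ _ = 0
  rw [eval_comp, eval_pow, eval_X, powRoots, eval_multiset_prod, Multiset.map_map]
  refine Multiset.prod_eq_zero ?_
  rw [Multiset.mem_map]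
  exact ⟨ζ, hζroot, by simp [hζk]⟩
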